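/- Let k, l, m be natural numbers with m > l, and suppose σ : [ω_{k+1}]^{m+1} → [ω_{k+1}]^{l+1} is finite-to-one with σ(x) ⊆ x for all x. Then there is an ordinal δ < ω_{k+1} with δ ≥ ω_k (of cofinality ω) such that every (m+1)-element subset x of ω_{k+1} with σ(x) ⊆ δ satisfies x ⊆ δ. -/

import Mathlib

open Cardinal Set Ordinal

universe u

/-- Auxiliary step lemma: given a bound `β`, all `(m+1)`-sets whose `σ`-image lies
below `β` are contained below some `γ` with `β < γ < ω_{k+1}`. -/
lemma stmt_10_step (k l m : ℕ)
    (σ : Finset Ordinal.{u} → Finset Ordinal.{u})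
    (hfin : ∀ B : Finset Ordinal.{u},
      {s : Finset Ordinal.{u} | s.card = m + 1 ∧
        (s : Set Ordinal) ⊆ Set.Iio (Cardinal.aleph (k + 1)).ord ∧ σ s = B}.Finite)
    (β : Ordinal.{u}) (hβ1 : (Cardinal.aleph k).ord ≤ β)
    (hβ2 : β < (Cardinal.aleph (k + 1)).ord) :
    ∃ γ : Ordinal.{u}, β < γ ∧ γ < (Cardinal.aleph (k + 1)).ord ∧
      ∀ s : Finset Ordinal.{u}, s.card = m + 1 →
        (s : Set Ordinal) ⊆ Set.Iio (Cardinal.aleph (k + 1)).ord →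
        (σ s : Set Ordinal) ⊆ Set.Iio β → (s : Set Ordinal) ⊆ Set.Iio γ := by
  classical
  set Λ : Ordinal.{u} := (Cardinal.aleph (k + 1)).ord with hΛ
  -- cofinality of Λ
  have hreg : Λ.cof = Cardinal.aleph ((k : Ordinal) + 1) := by
    rw [hΛ, Ordinal.add_one_eq_succ]
    exact (Cardinal.isRegular_aleph_succ (k : Ordinal)).cof_eq
  -- the collection of relevant finsets
  set T : Set (Finset Ordinal.{u}) := {s | s.card = m + 1 ∧
    (s : Set Ordinal) ⊆ Set.Iio Λ ∧ (σ s : Set Ordinal) ⊆ Set.Iio β} with hT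
  -- the union of relevant finsets
  set U : Set Ordinal.{u} := ⋃ s : T, ((s : Finset Ordinal) : Set Ordinal) with hU
  have hUΛ : U ⊆ Set.Iio Λ := by
    rintro x hx
    rw [hU, Set.mem_iUnion] at hx
    obtain ⟨s, hs⟩ := hx
    exact s.2.2.1 hs
  -- cardinality facts about β
  have hcardβ : β.card < Cardinal.aleph ((k : Ordinal) + 1) := Cardinal.lt_ord.mp hβ2
  have hcardβ0 : Cardinal.aleph0 ≤ β.card :=
    (Cardinal.aleph0_le_aleph (k : Ordinal)).trans (Cardinal.ord_le.mp hβ1)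
  have hcardβ0' : Cardinal.aleph0 ≤ Cardinal.lift.{u + 1} β.card := by
    simpa using Cardinal.lift_le.2 hcardβ0
  have hIio : #(Set.Iio β) = Cardinal.lift.{u + 1} β.card := Ordinal.mk_Iio_ordinal β
  haveI : Infinite (Set.Iio β) := by
    rw [Cardinal.infinite_iff, hIio]; exact hcardβ0'
  -- the subtype of possible σ-values
  have hBtype : #({B : Finset Ordinal.{u} // (B : Set Ordinal) ⊆ Set.Iio β}) ≤
      Cardinal.lift.{u + 1} β.card := by
    have key : ∀ B : {B : Finset Ordinal.{u} // (B : Set Ordinal) ⊆ Set.Iio β},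
        (((B : Finset Ordinal).subtype (· ∈ Set.Iio β)).map
          (Function.Embedding.subtype _)) = (B : Finset Ordinal) := by
      intro B
      exact Finset.subtype_map_of_mem (fun x hx => B.2 hx)
    have hinj : Function.Injective
        (fun B : {B : Finset Ordinal.{u} // (B : Set Ordinal) ⊆ Set.Iio β} =>
          (B : Finset Ordinal).subtype (· ∈ Set.Iio β)) := by
      intro B C h
      apply Subtype.ext
      rw [← key B, ← key C]
      simp only at h
      rw [h]
    calc #({B : Finset Ordinal.{u} // (B : Set Ordinal) ⊆ Set.Iio β})
        ≤ #(Finset (Set.Iio β)) := Cardinal.mk_le_of_injective hinj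
      _ = #(Set.Iio β) := Cardinal.mk_finset_of_infinite _
      _ = Cardinal.lift.{u + 1} β.card := hIio
  -- cardinality of T
  have hTcard : #T ≤ Cardinal.lift.{u + 1} β.card := by
    set f : T → {B : Finset Ordinal.{u} // (B : Set Ordinal) ⊆ Set.Iio β} :=
      fun s => ⟨σ s, s.2.2.2⟩ with hf
    have hfib : ∀ B, #(f ⁻¹' {B}) ≤ Cardinal.aleph0 := by
      intro B
      have hfin' : (f ⁻¹' {B}).Finite := by
        have himg : Subtype.val '' (f ⁻¹' {B}) ⊆
            {s : Finset Ordinal.{u} | s.card = m + 1 ∧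
              (s : Set Ordinal) ⊆ Set.Iio Λ ∧ σ s = B} := by
          rintro s ⟨t, ht, rfl⟩
          refine ⟨t.2.1, t.2.2.1, ?_⟩
          simp only [Set.mem_preimage, Set.mem_singleton_iff, hf] at ht
          exact congrArg Subtype.val ht
        exact Set.Finite.of_finite_image ((hfin B.1).subset himg)
          Subtype.val_injective.injOn
      exact hfin'.lt_aleph0.le
    calc #T ≤ #({B : Finset Ordinal.{u} // (B : Set Ordinal) ⊆ Set.Iio β}) * Cardinal.aleph0 :=
          Cardinal.mk_le_mk_mul_of_mk_preimage_le f hfib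
      _ ≤ Cardinal.lift.{u + 1} β.card * Cardinal.aleph0 := mul_le_mul' hBtype le_rfl
      _ = Cardinal.lift.{u + 1} β.card :=
          Cardinal.mul_eq_left hcardβ0' hcardβ0' Cardinal.aleph0_ne_zero
  -- cardinality of U
  have hUcard : #U ≤ Cardinal.lift.{u + 1} β.card := by
    calc #U ≤ #T * ⨆ s : T, #(((s : Finset Ordinal.{u}) : Set Ordinal)) :=
          Cardinal.mk_iUnion_le _
      _ ≤ Cardinal.lift.{u + 1} β.card * Cardinal.aleph0 := by
          apply mul_le_mul' hTcard
          exact ciSup_le' fun s => ((s : Finset Ordinal.{u}).finite_toSet.lt_aleph0).le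
      _ = Cardinal.lift.{u + 1} β.card :=
          Cardinal.mul_eq_left hcardβ0' hcardβ0' Cardinal.aleph0_ne_zero
  -- get an injection from U into a small type to bound it
  have hle : #U ≤ #(ULift.{u + 1} (Quotient.out β.card)) := by
    rw [Cardinal.mk_uLift, Cardinal.mk_out]
    exact hUcard
  obtain ⟨e⟩ := (Cardinal.le_def _ _).mp hle
  set g : Quotient.out β.card → Ordinal.{u} := fun i =>
    if h : ∃ x : U, e x = ULift.up i then (h.choose : Ordinal) else 0 with hg
  have hgΛ : ∀ i, g i < Λ := by
    intro i
    rw [hg]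
    dsimp only
    split
    · next h => exact hUΛ h.choose.2
    · next h =>
      apply Cardinal.lt_ord.mpr
      simpa using Cardinal.aleph_pos ((k : Ordinal) + 1)
  have hsup : (⨆ i, g i) < Λ := by
    apply Ordinal.iSup_lt_ord _ hgΛ
    rw [Cardinal.mk_out, hreg]
    exact hcardβ
  have hUbound : ∀ x ∈ U, x ≤ ⨆ i, g i := by
    intro x hx
    have h : ∃ y : U, e y = ULift.up (e ⟨x, hx⟩).down := ⟨⟨x, hx⟩, rfl⟩
    have hchoose : h.choose = ⟨x, hx⟩ := e.injective h.choose_spec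
    have heq : g (e ⟨x, hx⟩).down = x := by
      rw [hg]
      dsimp only
      rw [dif_pos h, hchoose]
    rw [← heq]
    exact Ordinal.le_iSup g _
  -- Λ is a limit ordinal
  have hΛlim : Order.IsSuccLimit Λ := Cardinal.isSuccLimit_ord (Cardinal.aleph0_le_aleph _)
  refine ⟨max (β + 1) ((⨆ i, g i) + 1), ?_, ?_, ?_⟩
  · exact lt_max_of_lt_left (Order.lt_add_one_iff.mpr le_rfl)
  · apply max_lt
    · rw [Ordinal.add_one_eq_succ]
      exact hΛlim.succ_lt hβ2
    · rw [Ordinal.add_one_eq_succ]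
      exact hΛlim.succ_lt hsup
  · intro s hcard hsub hσs x hx
    have hsT : s ∈ T := ⟨hcard, hsub, hσs⟩
    have hxU : x ∈ U := by
      rw [hU, Set.mem_iUnion]
      exact ⟨⟨s, hsT⟩, hx⟩
    exact lt_max_of_lt_right (lt_of_le_of_lt (hUbound x hxU)
      (Order.lt_add_one_iff.mpr le_rfl))

theorem stmt_10 (k l m : ℕ) (hml : m > l)
    (σ : Finset Ordinal → Finset Ordinal)
    (hσ : ∀ s : Finset Ordinal, s.card = m + 1 →
      (s : Set Ordinal) ⊆ Set.Iio (Cardinal.aleph (k + 1)).ord →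
      σ s ⊆ s ∧ (σ s).card = l + 1)
    (hfin : ∀ B : Finset Ordinal,
      {s : Finset Ordinal | s.card = m + 1 ∧
        (s : Set Ordinal) ⊆ Set.Iio (Cardinal.aleph (k + 1)).ord ∧ σ s = B}.Finite) :
    ∃ δ : Ordinal, (Cardinal.aleph k).ord ≤ δ ∧ δ < (Cardinal.aleph (k + 1)).ord ∧
      δ.cof = Cardinal.aleph0 ∧
      ∀ s : Finset Ordinal, s.card = m + 1 →
        (s : Set Ordinal) ⊆ Set.Iio (Cardinal.aleph (k + 1)).ord →
        (σ s : Set Ordinal) ⊆ Set.Iio δ → (s : Set Ordinal) ⊆ Set.Iio δ := by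
  classical
  set Λ : Ordinal := (Cardinal.aleph (k + 1)).ord with hΛ
  have haleph : Cardinal.aleph (k : Ordinal) < Cardinal.aleph ((k : Ordinal) + 1) :=
    Cardinal.aleph_lt_aleph.mpr (lt_add_one _)
  have hΛk : (Cardinal.aleph k).ord < Λ := Cardinal.ord_lt_ord.mpr haleph
  -- the recursive step function
  set P : Ordinal → Prop := fun β => (Cardinal.aleph k).ord ≤ β ∧ β < Λ with hP
  set F : {β // P β} → {β // P β} := fun β =>
    ⟨(stmt_10_step k l m σ hfin β.1 β.2.1 β.2.2).choose,
      le_of_lt (lt_of_le_of_lt β.2.1 (stmt_10_step k l m σ hfin β.1 β.2.1 β.2.2).choose_spec.1),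
      (stmt_10_step k l m σ hfin β.1 β.2.1 β.2.2).choose_spec.2.1⟩ with hF
  set d : ℕ → {β // P β} := fun n => F^[n] ⟨(Cardinal.aleph k).ord, le_rfl, hΛk⟩ with hd
  have hdsucc : ∀ n, d (n + 1) = F (d n) := by
    intro n
    rw [hd]
    exact Function.iterate_succ_apply' F n _
  have hmono : ∀ n, (d n).1 < (d (n + 1)).1 := by
    intro n
    rw [hdsucc]
    exact (stmt_10_step k l m σ hfin (d n).1 (d n).2.1 (d n).2.2).choose_spec.1
  have hstep : ∀ n, ∀ s : Finset Ordinal, s.card = m + 1 →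
      (s : Set Ordinal) ⊆ Set.Iio Λ →
      (σ s : Set Ordinal) ⊆ Set.Iio (d n).1 → (s : Set Ordinal) ⊆ Set.Iio (d (n + 1)).1 := by
    intro n
    rw [hdsucc]
    exact (stmt_10_step k l m σ hfin (d n).1 (d n).2.1 (d n).2.2).choose_spec.2.2
  set δ : Ordinal := ⨆ n, (d n).1 with hδ
  have hled : ∀ n, (d n).1 ≤ δ := fun n => Ordinal.le_iSup (fun n => (d n).1) n
  have hltδ : ∀ n, (d n).1 < δ := fun n => lt_of_lt_of_le (hmono n) (hled (n + 1))
  have hreg : Λ.cof = Cardinal.aleph ((k : Ordinal) + 1) := by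
    rw [hΛ, Ordinal.add_one_eq_succ]
    exact (Cardinal.isRegular_aleph_succ (k : Ordinal)).cof_eq
  have hδΛ : δ < Λ := by
    apply Ordinal.iSup_lt_ord_lift
    · rw [hreg]
      simpa using (Cardinal.aleph0_le_aleph (k : Ordinal)).trans_lt haleph
    · exact fun n => (d n).2.2
  have hδk : (Cardinal.aleph k).ord ≤ δ := by
    have := hled 0
    simpa [hd] using this
  have hδlim : Order.IsSuccLimit δ := by
    refine Ordinal.isSuccLimit_iff.mpr ⟨?_, Order.isSuccPrelimit_of_succ_lt ?_⟩
    · intro h0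
      have h1 := hδk
      rw [h0] at h1
      have h2 : (0 : Ordinal) < (Cardinal.aleph (k : Ordinal)).ord :=
        Cardinal.lt_ord.mpr (by simpa using Cardinal.aleph_pos (k : Ordinal))
      exact absurd h1 (not_le.mpr h2)
    · intro a ha
      rw [hδ, Ordinal.lt_iSup_iff] at ha
      obtain ⟨n, hn⟩ := ha
      exact lt_of_le_of_lt
        (Order.succ_le_of_lt (lt_of_lt_of_le hn (le_of_lt (hmono n)))) (hltδ (n + 1))
  have hcof : δ.cof = Cardinal.aleph0 := by
    apply le_antisymm
    · have := Ordinal.cof_iSup_le_lift (f := fun n => (d n).1) (fun n => hltδ n)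
      simpa using this
    · exact Ordinal.aleph0_le_cof.mpr hδlim
  refine ⟨δ, hδk, hδΛ, hcof, ?_⟩
  intro s hcard hsub hσs
  -- σ s is finite and nonempty, so it is contained below some d n
  have hne : (σ s).Nonempty := by
    rw [← Finset.card_pos, (hσ s hcard hsub).2]
    omega
  have hmax : (σ s).max' hne < δ := hσs ((σ s).max'_mem hne)
  rw [hδ, Ordinal.lt_iSup_iff] at hmax
  obtain ⟨n, hn⟩ := hmax
  have hσn : (σ s : Set Ordinal) ⊆ Set.Iio (d n).1 :=
    fun x hx => lt_of_le_of_lt (Finset.le_max' _ x hx) hn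
  exact fun x hx => lt_of_lt_of_le (hstep n s hcard hsub hσn hx) (hled (n + 1))
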